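/- Let R ∈ ℂ with Im(R) ≠ 0. Then there exists s ∈ ℂ with Re(s) > 0 such that Re(−R√(s²+1)) > 0, where √ is the principal branch of the complex square root. In other words, any nonzero imaginary part of the parameter R destroys the uniform damping property of the PML-II layer. -/

import Mathlib

set_option maxHeartbeats 1000000


/-- If the parameter `R` has nonzero imaginary part, then there exists `s` with `Re(s) > 0`
such that `Re(−R√(s²+1)) > 0`: the PML-II layer is no longer uniformly damping. -/
theorem complex_R_destroys_damping (R : ℂ) (hR : R.im ≠ 0) :
    ∃ s : ℂ, 0 < s.re ∧ 0 < (-R * (s ^ 2 + 1) ^ (1/2 : ℂ)).re := by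
  set c : ℝ := R.re with hc
  set d : ℝ := R.im with hd
  set σ : ℝ := if 0 < d then 1 else -1 with hσ
  have hσ2 : σ * σ = 1 := by
    rcases lt_or_ge 0 d with h | h
    · simp [hσ, h]
    · rw [hσ, if_neg (not_lt.mpr h)]; norm_num
  have hσd : σ * d = |d| := by
    rcases lt_or_ge 0 d with h | h
    · simp [hσ, h, abs_of_pos h]
    · rw [hσ, if_neg (not_lt.mpr h), abs_of_nonpos h]; ring
  set b : ℝ := Real.sqrt (2 * (c / d) ^ 2 + 2) with hbdef
  have hb2 : b * b = 2 * (c / d) ^ 2 + 2 := Real.mul_self_sqrt (by positivity)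
  have hb0 : 0 < b := Real.sqrt_pos.mpr (by positivity)
  set s : ℂ := ⟨1, σ * b⟩ with hs
  have hsre : s.re = 1 := rfl
  have hsim : s.im = σ * b := rfl
  have hzre : (s ^ 2 + 1).re = 2 - b * b := by
    simp only [pow_two, Complex.add_re, Complex.mul_re, Complex.one_re, hsre, hsim]
    nlinarith [hσ2]
  have hzim : (s ^ 2 + 1).im = 2 * (σ * b) := by
    simp only [pow_two, Complex.add_im, Complex.mul_im, Complex.one_im, hsre, hsim]
    ring
  set A : ℝ := ‖s ^ 2 + 1‖ with hA
  have hA0 : 0 ≤ A := norm_nonneg _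
  have hA2 : A * A = (b * b) * (b * b) + 4 := by
    have h := Complex.sq_norm (s ^ 2 + 1)
    rw [Complex.normSq_apply, hzre, hzim] at h
    nlinarith [hσ2, h]
  have hAgeb : b * b ≤ A := by nlinarith [hA2, hA0]
  have hAle : A ≤ b * b + 2 := by nlinarith [hA2, hA0, sq_nonneg b]
  have h12 : (1 / 2 : ℂ) = (2⁻¹ : ℂ) := by norm_num
  set F : ℝ := (A + (2 - b * b)) / 2 with hF
  set E : ℝ := (A - (2 - b * b)) / 2 with hE
  have hvre : ((s ^ 2 + 1) ^ (1 / 2 : ℂ)).re = Real.sqrt F := by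
    rw [h12, Complex.cpow_inv_two_re, hzre]
  have hvim : ((s ^ 2 + 1) ^ (1 / 2 : ℂ)).im = σ * Real.sqrt E := by
    rcases lt_or_ge 0 d with h | h
    · have hσ1 : σ = 1 := by simp [hσ, h]
      rw [h12, Complex.cpow_inv_two_im_eq_sqrt (by rw [hzim, hσ1]; positivity), hzre, hσ1,
        one_mul]
    · have hσ1 : σ = -1 := by rw [hσ, if_neg (not_lt.mpr h)]
      rw [h12, Complex.cpow_inv_two_im_eq_neg_sqrt (by rw [hzim, hσ1]; nlinarith [hb0]), hzre, hσ1]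
      ring
  have hF2 : F ≤ 2 := by rw [hF]; linarith
  have hF0 : 0 ≤ F := by rw [hF]; linarith [hAgeb, sq_nonneg b]
  have hEge : 2 * (c / d) ^ 2 + 1 ≤ E := by rw [hE]; linarith [hAgeb, hb2]
  -- bound c * √F ≤ √(2 c²)
  have h1 : c * Real.sqrt F ≤ Real.sqrt (2 * c ^ 2) := by
    calc c * Real.sqrt F ≤ Real.sqrt (c ^ 2) * Real.sqrt F := by
          have := Real.sqrt_sq_eq_abs c
          nlinarith [le_abs_self c, Real.sqrt_nonneg F]
      _ = Real.sqrt (c ^ 2 * F) := (Real.sqrt_mul (sq_nonneg c) F).symm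
      _ ≤ Real.sqrt (2 * c ^ 2) := Real.sqrt_le_sqrt (by nlinarith [sq_nonneg c])
  have h2 : Real.sqrt (2 * c ^ 2) < Real.sqrt (2 * c ^ 2 + d ^ 2) :=
    Real.sqrt_lt_sqrt (by positivity) (by have hd2 : 0 < d ^ 2 := lt_of_le_of_ne (sq_nonneg d) (Ne.symm (pow_ne_zero 2 hR)); linarith)
  have h3 : Real.sqrt (2 * c ^ 2 + d ^ 2) ≤ |d| * Real.sqrt E := by
    have hdE : |d| * Real.sqrt E = Real.sqrt (d ^ 2 * E) := by
      rw [Real.sqrt_mul (sq_nonneg d), Real.sqrt_sq_eq_abs]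
    rw [hdE]
    apply Real.sqrt_le_sqrt
    have hid : d ^ 2 * (2 * (c / d) ^ 2 + 1) = 2 * c ^ 2 + d ^ 2 := by
      field_simp
    nlinarith [hEge, sq_nonneg d]
  refine ⟨s, by rw [hsre]; norm_num, ?_⟩
  rw [Complex.mul_re, Complex.neg_re, Complex.neg_im, hvre, hvim, ← hc, ← hd]
  have : d * (σ * Real.sqrt E) = |d| * Real.sqrt E := by rw [← hσd]; ring
  nlinarith [h1, h2, h3, this]
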